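/- For every j ≥ 1, the infinite series Σ_{l=j}^∞ C(l,j)/4^l converges and equals 1/2^j, where C(l,j) are the Catalan triangle numbers. -/

import Mathlib

open Finset Filter

noncomputable def ctf (l j : ℕ) : ℝ :=
  if 1 ≤ j ∧ j ≤ l then ((2*l-j-1).choose (l-1) : ℝ) - ((2*l-j-1).choose l : ℝ) else 0

-- recurrence for ctf
lemma ctf_rec (l j : ℕ) (h1 : 1 ≤ j) (h2 : j ≤ l) (hne : (l, j) ≠ (1, 1)) :
    ctf l j = ctf (l-1) (j-1) + ctf l (j+1) := by
  rcases eq_or_lt_of_le h1 with rfl | hj2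
  · -- j = 1, l ≥ 2
    have hl : 2 ≤ l := by
      by_contra h
      have : l = 1 := by omega
      subst this
      exact hne rfl
    obtain ⟨m, rfl⟩ : ∃ m, l = m + 2 := ⟨l - 2, by omega⟩
    have e0 : ctf (m + 2 - 1) 0 = 0 := by simp [ctf]
    rw [e0, zero_add]
    have i1 : 2*(m+2)-1-1 = 2*m+2 := by omega
    have i2 : (m+2)-1 = m+1 := by omega
    have i3 : 2*(m+2)-2-1 = 2*m+1 := by omega
    simp only [ctf, if_pos (by omega : 1 ≤ 1 ∧ 1 ≤ m+2), if_pos (by omega : 1 ≤ 2 ∧ 2 ≤ m+2),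
      i1, i2, i3]
    have p1 : (2*m+2).choose (m+1) = (2*m+1).choose m + (2*m+1).choose (m+1) :=
      Nat.choose_succ_succ' (2*m+1) m
    have p2 : (2*m+2).choose (m+2) = (2*m+1).choose (m+1) + (2*m+1).choose (m+2) :=
      Nat.choose_succ_succ' (2*m+1) (m+1)
    have sy : (2*m+1).choose m = (2*m+1).choose (m+1) := by
      have := Nat.choose_symm (by omega : m+1 ≤ 2*m+1)
      have h' : 2*m+1-(m+1) = m := by omega
      rw [h'] at this
      exact this
    rw [p1, p2, sy]
    push_cast
    ring
  · -- j ≥ 2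
    rcases eq_or_lt_of_le h2 with rfl | hjl
    · -- j = l (≥ 2)
      obtain ⟨m, rfl⟩ : ∃ m, j = m + 2 := ⟨j - 2, by omega⟩
      have e0 : ctf (m+2) (m+3) = 0 := by simp [ctf]
      rw [e0, add_zero]
      have i1 : 2*(m+2)-(m+2)-1 = m+1 := by omega
      have i2 : (m+2)-1 = m+1 := by omega
      have i3 : 2*(m+1)-(m+1)-1 = m := by omega
      have i4 : (m+1)-1 = m := by omega
      simp only [ctf, if_pos (by omega : 1 ≤ m+2 ∧ m+2 ≤ m+2),
        if_pos (by omega : 1 ≤ m+1 ∧ m+1 ≤ m+1), i1, i2, i3, i4]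
      rw [Nat.choose_self, Nat.choose_self,
        Nat.choose_eq_zero_of_lt (by omega : m+1 < m+2),
        Nat.choose_eq_zero_of_lt (by omega : m < m+1)]
    · -- 2 ≤ j < l
      obtain ⟨b, rfl⟩ : ∃ b, j = b + 2 := ⟨j - 2, by omega⟩
      obtain ⟨a, rfl⟩ : ∃ a, l = b + a + 3 := ⟨l - b - 3, by omega⟩
      have i1 : 2*(b+a+3)-(b+2)-1 = b+2*a+3 := by omega
      have i2 : (b+a+3)-1 = b+a+2 := by omega
      have i3 : 2*(b+a+2)-(b+1)-1 = b+2*a+2 := by omega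
      have i4 : (b+a+2)-1 = b+a+1 := by omega
      have i5 : 2*(b+a+3)-(b+3)-1 = b+2*a+2 := by omega
      have e1 : (b+a+3) - 1 = b+a+2 := by omega
      have e2 : (b+2) - 1 = b+1 := by omega
      rw [e1, e2]
      simp only [ctf, if_pos (by omega : 1 ≤ b+2 ∧ b+2 ≤ b+a+3),
        if_pos (by omega : 1 ≤ b+1 ∧ b+1 ≤ b+a+2),
        if_pos (by omega : 1 ≤ b+3 ∧ b+3 ≤ b+a+3), i1, i2, i3, i4, i5]
      have p1 : (b+2*a+3).choose (b+a+2) = (b+2*a+2).choose (b+a+1) + (b+2*a+2).choose (b+a+2) :=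
        Nat.choose_succ_succ' (b+2*a+2) (b+a+1)
      have p2 : (b+2*a+3).choose (b+a+3) = (b+2*a+2).choose (b+a+2) + (b+2*a+2).choose (b+a+3) :=
        Nat.choose_succ_succ' (b+2*a+2) (b+a+2)
      rw [p1, p2]
      push_cast
      ring

lemma cb_sq_bound (n : ℕ) : (Nat.centralBinom n)^2 * (2*n+1) ≤ 16^n := by
  induction n with
  | zero => simp [Nat.centralBinom]
  | succ n ih =>
    have key := Nat.succ_mul_centralBinom_succ n
    have hmul : (n+1)^2 * ((Nat.centralBinom (n+1))^2 * (2*(n+1)+1))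
        ≤ (n+1)^2 * 16^(n+1) := by
      have e : (n+1)^2 * ((Nat.centralBinom (n+1))^2 * (2*(n+1)+1))
          = ((n+1) * Nat.centralBinom (n+1))^2 * (2*n+3) := by ring
      rw [e, key]
      have e2 : (2*(2*n+1) * Nat.centralBinom n)^2 * (2*n+3)
          = (4*(2*n+1)*(2*n+3)) * ((Nat.centralBinom n)^2 * (2*n+1)) := by ring
      rw [e2]
      calc (4*(2*n+1)*(2*n+3)) * ((Nat.centralBinom n)^2 * (2*n+1))
          ≤ (4*(2*n+1)*(2*n+3)) * 16^n := Nat.mul_le_mul_left _ ih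
        _ ≤ ((n+1)^2 * 16) * 16^n := Nat.mul_le_mul_right _ (by nlinarith)
        _ = (n+1)^2 * 16^(n+1) := by ring
    exact Nat.le_of_mul_le_mul_left hmul (by positivity)

lemma cb_tendsto : Tendsto (fun n : ℕ => (Nat.centralBinom n : ℝ) / (2*4^n)) atTop (nhds 0) := by
  apply squeeze_zero (fun n => by positivity) (g := fun n : ℕ => Real.sqrt (1/(n+1)))
  · intro n
    have hb := cb_sq_bound n
    have hb' : ((Nat.centralBinom n : ℝ))^2 * (2*n+1) ≤ 16^n := by exact_mod_cast hb
    have h1 : ((Nat.centralBinom n : ℝ) / (2*4^n))^2 ≤ 1/(n+1) := by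
      rw [div_pow, div_le_div_iff₀ (by positivity) (by positivity)]
      have e : ((2:ℝ)*4^n)^2 = 4 * 16^n := by
        have : ((4:ℝ))^n*4^n = 16^n := by
          rw [← mul_pow]; norm_num
        nlinarith [this]
      rw [e]
      nlinarith [hb', sq_nonneg ((Nat.centralBinom n : ℝ))]
    have h2 : (0:ℝ) ≤ (Nat.centralBinom n : ℝ) / (2*4^n) := by positivity
    calc (Nat.centralBinom n : ℝ) / (2*4^n)
        = Real.sqrt (((Nat.centralBinom n : ℝ) / (2*4^n))^2) := by
          rw [Real.sqrt_sq h2]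
      _ ≤ Real.sqrt (1/(n+1)) := Real.sqrt_le_sqrt h1
  · have := (tendsto_one_div_add_atTop_nhds_zero_nat).sqrt
    rw [Real.sqrt_zero] at this
    exact this

lemma cb_succ_eq (N : ℕ) :
    Nat.centralBinom (N+1) = 2 * ((2*N).choose N + (2*N).choose (N+1)) := by
  have e : 2*(N+1) = (2*N+1)+1 := by ring
  have p1 : ((2*N+1)+1).choose (N+1) = (2*N+1).choose N + (2*N+1).choose (N+1) :=
    Nat.choose_succ_succ' (2*N+1) N
  have sy : (2*N+1).choose N = (2*N+1).choose (N+1) := by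
    have := Nat.choose_symm (by omega : N+1 ≤ 2*N+1)
    have h' : 2*N+1-(N+1) = N := by omega
    rwa [h'] at this
  have p2 : (2*N+1).choose (N+1) = (2*N).choose N + (2*N).choose (N+1) :=
    Nat.choose_succ_succ' (2*N) N
  rw [Nat.centralBinom, e, p1, sy, p2]
  ring

lemma sum_col1 (N : ℕ) :
    ∑ l ∈ range (N+1), ctf l 1 / 4^l = 1/2 - (Nat.centralBinom N : ℝ)/(2*4^N) := by
  induction N with
  | zero =>
    simp [ctf, Nat.centralBinom]
  | succ N ih =>
    rw [Finset.sum_range_succ, ih]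
    have e1 : 2*(N+1)-1-1 = 2*N := by omega
    have e2 : (N+1)-1 = N := by omega
    have hctf : ctf (N+1) 1 = ((2*N).choose N : ℝ) - ((2*N).choose (N+1) : ℝ) := by
      rw [ctf, if_pos (by omega : 1 ≤ 1 ∧ 1 ≤ N+1), e1, e2]
    rw [hctf, cb_succ_eq N, Nat.centralBinom]
    push_cast
    have h4 : (4:ℝ)^(N+1) = 4^N * 4 := by ring
    rw [h4]
    have hp : (0:ℝ) < 4^N := by positivity
    field_simp
    ring

lemma ctf_nonneg_col1 (l : ℕ) : 0 ≤ ctf l 1 := by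
  rw [ctf]
  split
  · have h := Nat.choose_le_middle l (2*l-2)
    have e : (2*l-2)/2 = l-1 := by omega
    rw [e] at h
    have : ((2*l-1-1).choose l : ℝ) ≤ ((2*l-1-1).choose (l-1) : ℝ) := by
      have e2 : 2*l-1-1 = 2*l-2 := by omega
      rw [e2]; exact_mod_cast h
    linarith
  · exact le_refl 0

lemma col1_hasSum : HasSum (fun l : ℕ => ctf l 1 / 4^l) (1/2) := by
  rw [hasSum_iff_tendsto_nat_of_nonneg (fun l => by
    have := ctf_nonneg_col1 l; positivity)]
  rw [← tendsto_add_atTop_iff_nat 1]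
  have : (fun n : ℕ => ∑ i ∈ range (n+1), ctf i 1 / 4^i)
      = fun n : ℕ => 1/2 - (Nat.centralBinom n : ℝ)/(2*4^n) := by
    funext n; exact sum_col1 n
  rw [this]
  simpa using tendsto_const_nhds.sub cb_tendsto

lemma ctf_two_eq (l : ℕ) (hl : 2 ≤ l) : ctf l 2 = ctf l 1 := by
  have h := ctf_rec l 1 le_rfl (by omega) (by
    intro hc
    have : l = 1 := congrArg Prod.fst hc
    omega)
  have e0 : ctf (l-1) 0 = 0 := by simp [ctf]
  rw [h, e0, zero_add]

lemma col2_hasSum : HasSum (fun l : ℕ => ctf l 2 / 4^l) (1/4) := by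
  have he : HasSum (fun l : ℕ => if l = 1 then (1/4:ℝ) else 0) (1/4) :=
    hasSum_ite_eq 1 (1/4)
  have h := col1_hasSum.sub he
  have hfun : (fun l : ℕ => ctf l 1 / 4^l - if l = 1 then (1/4:ℝ) else 0)
      = fun l : ℕ => ctf l 2 / 4^l := by
    funext l
    match l, Nat.lt_or_ge l 2 with
    | 0, _ => simp [ctf]
    | 1, _ =>
      have h1 : ctf 1 1 = 1 := by simp [ctf]
      have h2 : ctf 1 2 = 0 := by simp [ctf]
      rw [h1, h2]
      norm_num
    | (n+2), _ =>
      rw [ctf_two_eq (n+2) (by omega), if_neg (by omega)]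
      ring
  rw [hfun] at h
  rwa [show (1/2:ℝ) - 1/4 = 1/4 by norm_num] at h

lemma ctf_shift_hasSum {j : ℕ} (hj : 1 ≤ j) {s : ℝ}
    (h : HasSum (fun l : ℕ => ctf l j / 4^l) s) :
    HasSum (fun l : ℕ => ctf (l-1) j / 4^l) (s/4) := by
  have h1 : HasSum (fun n : ℕ => ctf ((n+1)-1) j / 4^(n+1)) (s/4) := by
    have := h.div_const 4
    have e : (fun n : ℕ => ctf n j / 4^n / 4) = fun n : ℕ => ctf ((n+1)-1) j / 4^(n+1) := by
      funext n
      simp only [Nat.add_sub_cancel]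
      rw [pow_succ]
      ring
    rwa [e] at this
  rw [← hasSum_nat_add_iff' (f := fun l : ℕ => ctf (l-1) j / 4^l) 1]
  have e0 : ∑ i ∈ range 1, ctf (i-1) j / 4^i = 0 := by
    simp [ctf]
  rw [e0, sub_zero]
  exact h1

lemma ctf_step (j : ℕ) (hj : 1 ≤ j)
    (hA : HasSum (fun l : ℕ => ctf l j / 4^l) ((1:ℝ)/2^j))
    (hB : HasSum (fun l : ℕ => ctf l (j+1) / 4^l) ((1:ℝ)/2^(j+1))) :
    HasSum (fun l : ℕ => ctf l (j+2) / 4^l) ((1:ℝ)/2^(j+2)) := by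
  have hshift := ctf_shift_hasSum hj hA
  have h := hB.sub hshift
  have hfun : (fun l : ℕ => ctf l (j+1) / 4^l - ctf (l-1) j / 4^l)
      = fun l : ℕ => ctf l (j+2) / 4^l := by
    funext l
    rcases Nat.lt_or_ge l (j+1) with hl | hl
    · have e1 : ctf l (j+1) = 0 := by rw [ctf, if_neg (by omega)]
      have e2 : ctf l (j+2) = 0 := by rw [ctf, if_neg (by omega)]
      have e3 : ctf (l-1) j = 0 := by rw [ctf, if_neg (by omega)]
      rw [e1, e2, e3]
      ring
    · have hr := ctf_rec l (j+1) (by omega) hl (by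
        intro hc
        have h1 : j + 1 = 1 := congrArg Prod.snd hc
        omega)
      have e : (j+1)-1 = j := by omega
      rw [e] at hr
      rw [hr]
      ring
  rw [hfun] at h
  have h2 : (0:ℝ) < 2^j := by positivity
  have e : (1:ℝ)/2^(j+2) = 1/2^(j+1) - 1/2^j/4 := by
    rw [pow_succ, pow_succ]
    ring
  rw [e]
  exact h


/-- For every j ≥ 1, Σ_{l=j}^∞ C(l,j)/4^l = 1/2^j (the terms with l < j vanish
since C(l,j) = 0 for j > l). -/
theorem catalan_triangle_column_series (C : ℕ → ℕ → ℝ)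
    (h11 : C 1 1 = 1)
    (h0 : ∀ i, C i 0 = 0)
    (hgt : ∀ i j, i < j → C i j = 0)
    (hrec : ∀ i j, 1 ≤ j → j ≤ i → (i, j) ≠ (1, 1) →
      C i j = C (i - 1) (j - 1) + C i (j + 1)) :
    ∀ j : ℕ, 1 ≤ j → HasSum (fun l : ℕ => C l j / 4 ^ l) ((1 : ℝ) / 2 ^ j) := by
  have key : ∀ l j, C l j = ctf l j := by
    intro l
    induction l using Nat.strong_induction_on with
    | _ l ih =>
      suffices h : ∀ d j, l + 1 ≤ j + d → C l j = ctf l j by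
        intro j
        exact h (l+1) j (by omega)
      intro d
      induction d with
      | zero =>
        intro j hjd
        rw [hgt l j (by omega), ctf, if_neg (by omega)]
      | succ d ihd =>
        intro j hjd
        rcases Nat.lt_or_ge (j + d) (l + 1) with hlt | hge
        · -- j + d = l
          rcases Nat.eq_zero_or_pos j with rfl | hj1
          · rw [h0 l, ctf, if_neg (by omega)]
          · have hjl : j ≤ l := by omega
            by_cases hone : l = 1 ∧ j = 1
            · obtain ⟨rfl, rfl⟩ := hone
              rw [h11, ctf]
              norm_num
            · have hne : (l, j) ≠ (1, 1) := by
                intro hc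
                exact hone ⟨congrArg Prod.fst hc, congrArg Prod.snd hc⟩
              rw [hrec l j hj1 hjl hne, ih (l-1) (by omega), ihd (j+1) (by omega),
                ctf_rec l j hj1 hjl hne]
        · exact ihd j hge
  have keyfun : ∀ j : ℕ, (fun l : ℕ => C l j / 4 ^ l) = fun l : ℕ => ctf l j / 4 ^ l := by
    intro j
    funext l
    rw [key]
  suffices h : ∀ j : ℕ, 1 ≤ j →
      HasSum (fun l : ℕ => ctf l j / 4 ^ l) ((1 : ℝ) / 2 ^ j) ∧
      HasSum (fun l : ℕ => ctf l (j+1) / 4 ^ l) ((1 : ℝ) / 2 ^ (j+1)) by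
    intro j hj
    rw [keyfun j]
    exact (h j hj).1
  intro j hj
  induction j, hj using Nat.le_induction with
  | base =>
    constructor
    · convert col1_hasSum using 2
      norm_num
    · convert col2_hasSum using 2
      norm_num
  | succ j hj ihj =>
    exact ⟨ihj.2, ctf_step j hj ihj.1 ihj.2⟩
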